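/- Let X be a reflexive real Banach space whose closed unit ball B_X equals the convex hull of its set of exposed points, and let Y be any real Banach space. Suppose T : X → Y is a nonzero compact bounded linear operator that is a left symmetric point of the space K(X,Y) of compact operators with respect to Birkhoff–James orthogonality. Then for every x ∈ M_T that is an exposed point of B_X, the vector Tx is a left symmetric point of Y with respect to Birkhoff–James orthogonality. -/

import Mathlib

open Filter Topology Set Metric NormedSpace

noncomputable section

/-- Birkhoff–James orthogonality: `x ⊥_B y` iff `‖x + t • y‖ ≥ ‖x‖` for all real `t`. -/
def BJOrth {E : Type*} [NormedAddCommGroup E] [NormedSpace ℝ E] (x y : E) : Prop :=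
  ∀ t : ℝ, ‖x‖ ≤ ‖x + t • y‖

/-- The norm derivative `ρ'₊(x,y) = ‖x‖ · lim_{t→0⁺} (‖x+ty‖-‖x‖)/t`. -/
def rhoPlus {E : Type*} [NormedAddCommGroup E] [NormedSpace ℝ E] (x y : E) : ℝ :=
  ‖x‖ * limUnder (𝓝[>] (0 : ℝ)) (fun t => (‖x + t • y‖ - ‖x‖) / t)

/-- The norm derivative `ρ'₋(x,y) = ‖x‖ · lim_{t→0⁻} (‖x+ty‖-‖x‖)/t`. -/
def rhoMinus {E : Type*} [NormedAddCommGroup E] [NormedSpace ℝ E] (x y : E) : ℝ :=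
  ‖x‖ * limUnder (𝓝[<] (0 : ℝ)) (fun t => (‖x + t • y‖ - ‖x‖) / t)

/-- The norm derivative `ρ'(x,y) = (ρ'₊(x,y) + ρ'₋(x,y))/2`. -/
def rhoDer {E : Type*} [NormedAddCommGroup E] [NormedSpace ℝ E] (x y : E) : ℝ :=
  (rhoPlus x y + rhoMinus x y) / 2

/-- `x` is an exposed point of the closed unit ball of `E`: there is a norm-one functional `f`
with `f x = 1` and `f u < 1` for every `u` in the ball with `u ≠ x`. -/
def ExposedPt {E : Type*} [NormedAddCommGroup E] [NormedSpace ℝ E] (x : E) : Prop :=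
  ‖x‖ ≤ 1 ∧ ∃ f : E →L[ℝ] ℝ, ‖f‖ = 1 ∧ f x = 1 ∧ ∀ u : E, ‖u‖ ≤ 1 → u ≠ x → f u < 1

private lemma mapClusterPt_unique_aux {α : Type*} [TopologicalSpace α] [T2Space α] {v : ℕ → α}
    {a b : α} (h : MapClusterPt a atTop v) (hb : Tendsto v atTop (𝓝 b)) : a = b :=
  t2_iff_nhds.mp (inferInstance) (h.clusterPt.mono hb)

set_option maxHeartbeats 1000000 in
theorem stmt0 {X Y : Type*} [NormedAddCommGroup X] [NormedSpace ℝ X] [CompleteSpace X]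
    [NormedAddCommGroup Y] [NormedSpace ℝ Y] [CompleteSpace Y]
    (hrefl : Function.Surjective (NormedSpace.inclusionInDoubleDual ℝ X))
    (hball : {x : X | ‖x‖ ≤ 1} = convexHull ℝ {x : X | ExposedPt x})
    (T : X →L[ℝ] Y) (hTc : IsCompactOperator T) (hT0 : T ≠ 0)
    (hleft : ∀ S : X →L[ℝ] Y, IsCompactOperator S → BJOrth T S → BJOrth S T) :
    ∀ x : X, (‖x‖ = 1 ∧ ‖T x‖ = ‖T‖) → ExposedPt x →
      ∀ y : Y, BJOrth (T x) y → BJOrth y (T x) := by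
  rintro x ⟨hx1, hx2⟩ ⟨hxball, f, hf1, hfx, hfexp⟩ y hTxy
  -- bound on f on the unit ball
  have hfu_le : ∀ u : X, ‖u‖ ≤ 1 → |f u| ≤ 1 := by
    intro u hu
    calc |f u| = ‖f u‖ := (Real.norm_eq_abs _).symm
    _ ≤ ‖f‖ * ‖u‖ := f.le_opNorm u
    _ ≤ 1 := by rw [hf1, one_mul]; exact hu
  -- the rank one operator A = f ⊗ y
  set A : X →L[ℝ] Y := f.smulRight y with hA
  have hAapp : ∀ u : X, A u = f u • y := fun u => rfl
  have hAc : IsCompactOperator A := by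
    refine ⟨(fun t : ℝ => t • y) '' Metric.closedBall 0 1,
      (isCompact_closedBall _ _).image (continuous_id.smul continuous_const), ?_⟩
    refine Filter.mem_of_superset (Metric.ball_mem_nhds 0 one_pos) ?_
    intro u hu
    refine ⟨f u, ?_, rfl⟩
    rw [Metric.mem_closedBall, dist_zero_right, Real.norm_eq_abs]
    exact hfu_le u (mem_ball_zero_iff.mp hu).le
  -- T is Birkhoff orthogonal to A
  have hTA : BJOrth T A := by
    intro t
    have hTAx : (T + t • A) x = T x + t • y := by
      simp [hAapp, hfx]
    calc ‖T‖ = ‖T x‖ := hx2.symm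
    _ ≤ ‖T x + t • y‖ := hTxy t
    _ = ‖(T + t • A) x‖ := by rw [hTAx]
    _ ≤ ‖T + t • A‖ * ‖x‖ := (T + t • A).le_opNorm x
    _ = ‖T + t • A‖ := by rw [hx1, mul_one]
  have hAT : BJOrth A T := hleft A hAc hTA
  -- argue by contradiction
  intro t₀
  by_contra hcon
  push_neg at hcon
  set c : ℝ := ‖y‖ with hc_def
  set δ : ℝ := c - ‖y + t₀ • T x‖ with hδ_def
  have hδ : 0 < δ := by simp only [hδ_def]; linarith
  have hc : 0 < c := lt_of_le_of_lt (norm_nonneg _) hcon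
  have hδc : δ ≤ c := by
    have : (0:ℝ) ≤ ‖y + t₀ • T x‖ := norm_nonneg _
    simp only [hδ_def]; linarith
  have ht₀ : t₀ ≠ 0 := by
    intro h
    rw [h] at hcon
    simp at hcon
    linarith
  have ht₀pos : 0 < |t₀| := abs_pos.mpr ht₀
  have hAnorm : c ≤ ‖A‖ := by
    have h1 : A x = y := by rw [hAapp, hfx, one_smul]
    calc c = ‖A x‖ := by rw [h1]
    _ ≤ ‖A‖ * ‖x‖ := A.le_opNorm x
    _ = ‖A‖ := by rw [hx1, mul_one]
  -- key construction of approximate norming points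
  have key : ∀ m : ℕ, ∃ w : X, ‖w‖ ≤ 1 ∧ 0 ≤ f w ∧
      (c - 1/((m:ℝ)+1)^2 - |t₀| * ‖T‖ / ((m:ℝ)+1)) / c ≤ f w ∧
      δ < 1/((m:ℝ)+1) + |t₀| * ‖T w - f w • T x‖ := by
    intro m
    set N : ℝ := (m:ℝ) + 1 with hN_def
    have hN1 : (1:ℝ) ≤ N := by
      have : (0:ℝ) ≤ (m:ℝ) := Nat.cast_nonneg m
      rw [hN_def]; linarith
    have hN : (0:ℝ) < N := lt_of_lt_of_le one_pos hN1
    set S : X →L[ℝ] Y := A + (t₀ / N) • T with hS_def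
    have hSnorm : c ≤ ‖S‖ := le_trans hAnorm (hAT (t₀ / N))
    obtain ⟨u, hu1, hu2⟩ := S.exists_lt_apply_of_lt_opNorm
      (show ‖S‖ - 1/N^2 < ‖S‖ by
        have : (0:ℝ) < 1/N^2 := by positivity
        linarith)
    set w : X := if 0 ≤ f u then u else -u with hw_def
    have hw1 : ‖w‖ ≤ 1 := by
      simp only [hw_def]
      split <;> simpa using hu1.le
    have hw2 : 0 ≤ f w := by
      simp only [hw_def]
      split
      · assumption
      · rw [map_neg]; linarith [lt_of_not_ge (by assumption : ¬ 0 ≤ f u)]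
    have hwS : ‖S‖ - 1/N^2 < ‖S w‖ := by
      simp only [hw_def]
      split
      · exact hu2
      · rwa [map_neg, norm_neg]
    have hSw_eq : S w = f w • y + (t₀ / N) • T w := by
      simp [hS_def, hAapp]
    have hfw1 : f w ≤ 1 := le_of_abs_le (hfu_le w hw1)
    have hTw : ‖T w‖ ≤ ‖T‖ := by
      have := mul_le_mul_of_nonneg_left hw1 (norm_nonneg T)
      calc ‖T w‖ ≤ ‖T‖ * ‖w‖ := T.le_opNorm w
      _ ≤ ‖T‖ := by rw [mul_one] at this; exact this
    -- first bound : lower bound on f w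
    have hb1 : c - 1/N^2 < f w * c + |t₀| * ‖T‖ / N := by
      have h2 : ‖S w‖ ≤ f w * c + |t₀| * ‖T‖ / N := by
        rw [hSw_eq]
        calc ‖f w • y + (t₀ / N) • T w‖ ≤ ‖f w • y‖ + ‖(t₀ / N) • T w‖ := norm_add_le _ _
        _ = |f w| * c + |t₀ / N| * ‖T w‖ := by
          rw [norm_smul, norm_smul, Real.norm_eq_abs, Real.norm_eq_abs]
        _ ≤ f w * c + |t₀| * ‖T‖ / N := by
          rw [abs_of_nonneg hw2, abs_div, abs_of_pos hN, div_mul_eq_mul_div]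
          gcongr
      linarith [lt_of_lt_of_le (lt_of_le_of_lt (by linarith [hSnorm] : c - 1/N^2 ≤ ‖S‖ - 1/N^2) hwS) h2]
    have hfwlb : (c - 1/N^2 - |t₀| * ‖T‖ / N) / c ≤ f w := by
      rw [div_le_iff₀ hc]
      linarith
    -- second bound : the main estimate
    set ε : ℝ := ‖T w - f w • T x‖ with hε_def
    have hid : f w • y + (t₀ / N) • T w
        = f w • (y + (t₀ / N) • T x) + (t₀ / N) • (T w - f w • T x) := by
      module
    have hconv : ‖y + (t₀ / N) • T x‖ ≤ c - δ / N := by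
      have hid2 : y + (t₀ / N) • T x
          = (1 - 1/N) • y + (1/N) • (y + t₀ • T x) := by
        have hNne : N ≠ 0 := ne_of_gt hN
        match_scalars
        · ring
        · field_simp
      rw [hid2]
      calc ‖(1 - 1/N) • y + (1/N) • (y + t₀ • T x)‖
          ≤ ‖(1 - 1/N) • y‖ + ‖(1/N) • (y + t₀ • T x)‖ := norm_add_le _ _
      _ = |1 - 1/N| * c + |1/N| * ‖y + t₀ • T x‖ := by
          rw [norm_smul, norm_smul, Real.norm_eq_abs, Real.norm_eq_abs]
      _ = (1 - 1/N) * c + (1/N) * (c - δ) := by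
          rw [abs_of_nonneg (by rw [sub_nonneg]; exact (div_le_one hN).mpr hN1),
            abs_of_pos (by positivity : (0:ℝ) < 1/N)]
          simp [hδ_def]
      _ = c - δ / N := by field_simp; ring
    have hb2 : ‖S w‖ ≤ f w * (c - δ / N) + |t₀| / N * ε := by
      rw [hSw_eq, hid]
      calc ‖f w • (y + (t₀ / N) • T x) + (t₀ / N) • (T w - f w • T x)‖
          ≤ ‖f w • (y + (t₀ / N) • T x)‖ + ‖(t₀ / N) • (T w - f w • T x)‖ := norm_add_le _ _
      _ = |f w| * ‖y + (t₀ / N) • T x‖ + |t₀ / N| * ε := by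
          rw [norm_smul, norm_smul, Real.norm_eq_abs, Real.norm_eq_abs]
      _ ≤ f w * (c - δ / N) + |t₀| / N * ε := by
          rw [abs_of_nonneg hw2, abs_div, abs_of_pos hN]
          have hεnn : 0 ≤ ε := norm_nonneg _
          gcongr
    have hcδN : 0 ≤ c - δ / N := by
      have : δ / N ≤ δ := div_le_self hδ.le hN1
      linarith
    have hfw_mul : f w * (c - δ / N) ≤ c - δ / N := mul_le_of_le_one_left hcδN hfw1
    have hεnn : 0 ≤ ε := norm_nonneg _
    have hmain : δ < 1/N + |t₀| * ε := by
      have h4 : c - 1/N^2 < c - δ / N + |t₀| / N * ε := by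
        calc c - 1/N^2 ≤ ‖S‖ - 1/N^2 := by linarith
        _ < ‖S w‖ := hwS
        _ ≤ f w * (c - δ / N) + |t₀| / N * ε := hb2
        _ ≤ c - δ / N + |t₀| / N * ε := by linarith
      have h5 : δ / N < 1/N^2 + |t₀| / N * ε := by linarith
      have h6 : δ < 1/N + |t₀| * ε := by
        have := mul_lt_mul_of_pos_left h5 hN
        calc δ = N * (δ / N) := by field_simp
        _ < N * (1/N^2 + |t₀| / N * ε) := by
            exact mul_lt_mul_of_pos_left h5 hN
        _ = 1/N + |t₀| * ε := by field_simp
      exact h6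
    exact ⟨w, hw1, hw2, hfwlb, hmain⟩
  choose w hw1 hw2 hw3 hw4 using key
  -- f (w m) tends to 1
  have hfw_le : ∀ m, f (w m) ≤ 1 := fun m => le_of_abs_le (hfu_le (w m) (hw1 m))
  have hNinv : Tendsto (fun m : ℕ => 1/((m:ℝ)+1)) atTop (𝓝 0) :=
    tendsto_one_div_add_atTop_nhds_zero_nat
  have hlb_tendsto : Tendsto
      (fun m : ℕ => (c - 1/((m:ℝ)+1)^2 - |t₀| * ‖T‖ / ((m:ℝ)+1)) / c) atTop (𝓝 1) := by
    have h1 : Tendsto (fun m : ℕ => 1/((m:ℝ)+1)^2) atTop (𝓝 0) := by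
      have := hNinv.mul hNinv
      simpa [one_div, pow_two, mul_inv] using this
    have h2 : Tendsto (fun m : ℕ => |t₀| * ‖T‖ / ((m:ℝ)+1)) atTop (𝓝 0) := by
      have := hNinv.const_mul (|t₀| * ‖T‖)
      simpa only [mul_one_div, mul_zero] using this
    have h3 : Tendsto (fun m : ℕ => c - 1/((m:ℝ)+1)^2 - |t₀| * ‖T‖ / ((m:ℝ)+1)) atTop
        (𝓝 c) := by
      have := (tendsto_const_nhds (x := c) (f := atTop (α := ℕ))).sub h1 |>.sub h2
      simpa using this
    have := h3.div_const c
    simpa [div_self (ne_of_gt hc)] using this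
  have hfw_tendsto : Tendsto (fun m : ℕ => f (w m)) atTop (𝓝 1) :=
    tendsto_of_tendsto_of_tendsto_of_le_of_le hlb_tendsto tendsto_const_nhds hw3 hfw_le
  -- use compactness of T to extract a norm convergent subsequence of (T (w m))
  obtain ⟨K, hK, hKmem⟩ := hTc
  obtain ⟨r, hr, hrK⟩ := Metric.mem_nhds_iff.mp hKmem
  have hvK : ∀ m, T ((r/2) • w m) ∈ K := by
    intro m
    apply hrK
    rw [mem_ball_zero_iff, norm_smul, Real.norm_eq_abs, abs_of_pos (by positivity)]
    have hr2 : (0:ℝ) < r/2 := by positivity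
    nlinarith [hw1 m, norm_nonneg (w m)]
  obtain ⟨a, _, n, hn, hna⟩ := hK.tendsto_subseq hvK
  have hTzw : Tendsto (fun k => T (w (n k))) atTop (𝓝 ((2/r) • a)) := by
    have h1 : Tendsto (fun k => (2/r) • T ((r/2) • w (n k))) atTop (𝓝 ((2/r) • a)) :=
      hna.const_smul (2/r)
    have hrne : r ≠ 0 := ne_of_gt hr
    have h2 : ∀ k, (2/r) • T ((r/2) • w (n k)) = T (w (n k)) := by
      intro k
      rw [map_smul, smul_smul]
      rw [show (2/r) * (r/2) = 1 by field_simp]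
      rw [one_smul]
    exact h1.congr h2
  set z : Y := (2/r) • a with hz_def
  -- weak-* cluster point in the double dual
  set ψ : ℕ → WeakDual ℝ (StrongDual ℝ X) :=
    fun k => StrongDual.toWeakDual (inclusionInDoubleDual ℝ X (w (n k))) with hψ_def
  have hψs : ∀ k, ψ k ∈ WeakDual.toStrongDual ⁻¹' Metric.closedBall (0 : StrongDual ℝ (StrongDual ℝ X)) 1 := by
    intro k
    refine (mem_closedBall_zero_iff (E := StrongDual ℝ (StrongDual ℝ X))).mpr ?_
    calc ‖WeakDual.toStrongDual (ψ k)‖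
        = ‖inclusionInDoubleDual ℝ X (w (n k))‖ := rfl
    _ ≤ ‖w (n k)‖ := double_dual_bound ℝ X _
    _ ≤ 1 := hw1 (n k)
  have hscomp : IsCompact (WeakDual.toStrongDual ⁻¹'
      Metric.closedBall (0 : StrongDual ℝ (StrongDual ℝ X)) 1) := WeakDual.isCompact_closedBall (𝕜 := ℝ) 0 1
  obtain ⟨Φ, hΦs, hΦ⟩ := hscomp.exists_mapClusterPt (f := atTop) (u := ψ)
    (Filter.le_principal_iff.mpr (Filter.mem_map.mpr (Filter.univ_mem' hψs)))
  obtain ⟨u₀, hu₀⟩ := hrefl (WeakDual.toStrongDual Φ)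
  have hu₀norm : ‖u₀‖ ≤ 1 := by
    have h1 : ‖inclusionInDoubleDual ℝ X u₀‖ = ‖u₀‖ :=
      (inclusionInDoubleDualLi ℝ (E := X)).norm_map u₀
    rw [← h1, hu₀]
    exact (mem_closedBall_zero_iff (E := StrongDual ℝ (StrongDual ℝ X))).mp hΦs
  -- evaluation of the cluster point at arbitrary functionals
  have hclu : ∀ h : StrongDual ℝ X,
      MapClusterPt (h u₀) atTop (fun k => h (w (n k))) := by
    intro h
    have hcont : ContinuousAt (fun Φ' : WeakDual ℝ (StrongDual ℝ X) => Φ' h) Φ :=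
      (WeakDual.eval_continuous h).continuousAt
    have := hΦ.continuousAt_comp hcont
    have heq : (fun Φ' : WeakDual ℝ (StrongDual ℝ X) => Φ' h) ∘ ψ = fun k => h (w (n k)) := rfl
    rw [heq] at this
    have hΦh : Φ h = h u₀ := by
      have : WeakDual.toStrongDual Φ h = h u₀ := by rw [← hu₀]; rfl
      exact this
    rwa [hΦh] at this
  -- f u₀ = 1, hence u₀ = x
  have hfwn : Tendsto (fun k => f (w (n k))) atTop (𝓝 1) :=
    hfw_tendsto.comp hn.tendsto_atTop
  have hfu₀ : f u₀ = 1 := mapClusterPt_unique_aux (hclu f) hfwn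
  have hu₀x : u₀ = x := by
    by_contra h
    exact absurd hfu₀ (ne_of_lt (hfexp u₀ hu₀norm h))
  -- z = T x via the dual
  have hzTx : z = T x := by
    rw [NormedSpace.eq_iff_forall_dual_eq ℝ]
    intro g
    have h1 : Tendsto (fun k => g (T (w (n k)))) atTop (𝓝 (g z)) :=
      (g.continuous.tendsto z).comp hTzw
    have h2 : MapClusterPt (g (T u₀)) atTop (fun k => (g.comp T) (w (n k))) := hclu (g.comp T)
    have h3 : g (T u₀) = g z := mapClusterPt_unique_aux h2 h1
    rw [← h3, hu₀x]
  -- final contradiction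
  have hε_tendsto : Tendsto (fun k => ‖T (w (n k)) - f (w (n k)) • T x‖) atTop (𝓝 0) := by
    have h1 : Tendsto (fun k => f (w (n k)) • T x) atTop (𝓝 ((1:ℝ) • T x)) :=
      hfwn.smul_const (T x)
    have h1' : Tendsto (fun k => T (w (n k))) atTop (𝓝 (T x)) := hzTx ▸ hTzw
    have h2 : Tendsto (fun k => T (w (n k)) - f (w (n k)) • T x) atTop
        (𝓝 (T x - (1:ℝ) • T x)) := h1'.sub h1
    have h3 : T x - (1:ℝ) • T x = 0 := by rw [one_smul, sub_self]
    rw [h3] at h2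
    simpa using h2.norm
  have hfinal : Tendsto (fun k => 1/((n k : ℝ)+1) + |t₀| * ‖T (w (n k)) - f (w (n k)) • T x‖)
      atTop (𝓝 0) := by
    have h1 : Tendsto (fun k => 1/((n k : ℝ)+1)) atTop (𝓝 0) :=
      hNinv.comp hn.tendsto_atTop
    have h2 := hε_tendsto.const_mul |t₀|
    have := h1.add h2
    simpa using this
  have hδle : δ ≤ 0 := ge_of_tendsto' hfinal (fun k => (hw4 (n k)).le)
  linarith
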